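/- Let (G, H₁, H₂) satisfy the Gassmann condition and let σ ∈ G. Then the permutation of H₁\G induced by right multiplication by σ and the permutation of H₂\G induced by right multiplication by σ have, for each n ≥ 1, the same number of orbits (cycles) of length n. -/

import Mathlib

open MulAction Function Subgroup

lemma gcte_card_sigma {ι : Type*} [Fintype ι] (f : ι → Type*) [∀ i, Finite (f i)] :
    Nat.card (Σ i, f i) = ∑ i, Nat.card (f i) := by
  haveI := fun i => Fintype.ofFinite (f i)
  simp [Nat.card_eq_fintype_card]

lemma gcte_inversion (F₁ F₂ : ℕ → ℕ)
    (h : ∀ k : ℕ, 1 ≤ k → ∑ d ∈ k.divisors, d * F₁ d = ∑ d ∈ k.divisors, d * F₂ d) :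
    ∀ n : ℕ, 1 ≤ n → F₁ n = F₂ n := by
  intro n
  induction n using Nat.strong_induction_on with
  | _ n ih =>
    intro hn
    have hne : n ≠ 0 := by omega
    have hdiv := h n hn
    rw [← Nat.insert_self_properDivisors hne, Finset.sum_insert Nat.self_notMem_properDivisors,
      Finset.sum_insert Nat.self_notMem_properDivisors] at hdiv
    have hps : ∑ d ∈ n.properDivisors, d * F₁ d = ∑ d ∈ n.properDivisors, d * F₂ d := by
      refine Finset.sum_congr rfl fun d hd => ?_
      rw [Nat.mem_properDivisors] at hd
      have hd1 : 1 ≤ d := by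
        rcases Nat.eq_zero_or_pos d with h0 | h1
        · exact absurd (h0 ▸ hd.1) (by simpa [h0] using fun h => hne (by simpa using h))
        · exact h1
      rw [ih d hd.2 hd1]
    rw [hps] at hdiv
    have := Nat.add_right_cancel hdiv
    exact Nat.eq_of_mul_eq_mul_left (by omega) this

lemma gcte_orbit_card {K : Type*} [Group K] (X : Type*) [Finite X] [MulAction K X]
    (a : K) (hgen : ∀ x : K, x ∈ Subgroup.zpowers a) (x : X) :
    Nat.card (orbitRel.Quotient.orbit (Quotient.mk'' x : orbitRel.Quotient K X)) =
      Function.minimalPeriod (a • ·) x := by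
  rw [orbitRel.Quotient.orbit_mk]
  have horb : MulAction.orbit K x = MulAction.orbit (Subgroup.zpowers a) x := by
    apply le_antisymm
    · rintro y ⟨k, rfl⟩
      obtain ⟨n, rfl⟩ := Subgroup.mem_zpowers_iff.mp (hgen k)
      exact ⟨⟨a ^ n, Subgroup.zpow_mem _ (Subgroup.mem_zpowers a) n⟩, rfl⟩
    · exact MulAction.orbit_subgroup_subset _ _
  rw [horb]
  haveI : Fintype (MulAction.orbit (Subgroup.zpowers a) x) := Fintype.ofFinite _
  rw [Nat.card_eq_fintype_card, ← MulAction.minimalPeriod_eq_card]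

lemma gcte_fixed_iff {K : Type*} [Group K] (X : Type*) [Finite X] [MulAction K X]
    (a : K) (hgen : ∀ x : K, x ∈ Subgroup.zpowers a) (x : X) (k : ℕ) :
    a ^ k • x = x ↔
      Nat.card (orbitRel.Quotient.orbit (Quotient.mk'' x : orbitRel.Quotient K X)) ∣ k := by
  rw [gcte_orbit_card X a hgen x, MulAction.pow_smul_eq_iff_minimalPeriod_dvd]

lemma gcte_count {K : Type*} [Group K] (X : Type*) [Finite X] [MulAction K X]
    (a : K) (hgen : ∀ x : K, x ∈ Subgroup.zpowers a) (k : ℕ) (hk : 1 ≤ k) :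
    Nat.card {x : X // a ^ k • x = x} =
      ∑ d ∈ k.divisors, d * Nat.card {o : orbitRel.Quotient K X //
        Nat.card (orbitRel.Quotient.orbit o) = d} := by
  classical
  haveI : Fintype X := Fintype.ofFinite X
  haveI : Fintype (orbitRel.Quotient K X) := Fintype.ofFinite _
  set Ω := orbitRel.Quotient K X with hΩ
  set c : Ω → ℕ := fun o => Nat.card (orbitRel.Quotient.orbit o) with hc
  have stepA : Nat.card {x : X // a ^ k • x = x}
      = ∑ o : Ω, Nat.card {x : X // (a ^ k • x = x) ∧ (Quotient.mk'' x : Ω) = o} := by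
    rw [Nat.card_congr (Equiv.sigmaFiberEquiv
      (fun y : {x : X // a ^ k • x = x} => (Quotient.mk'' y.1 : Ω))).symm,
      gcte_card_sigma]
    refine Finset.sum_congr rfl fun o _ => ?_
    exact Nat.card_congr (Equiv.subtypeSubtypeEquivSubtypeInter
      (fun x : X => a ^ k • x = x) (fun x => (Quotient.mk'' x : Ω) = o))
  have stepB : ∀ o : Ω, Nat.card {x : X // (a ^ k • x = x) ∧ (Quotient.mk'' x : Ω) = o}
      = if c o ∣ k then c o else 0 := by
    intro o
    by_cases hdvd : c o ∣ k
    · rw [if_pos hdvd]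
      have e1 : {x : X // (a ^ k • x = x) ∧ (Quotient.mk'' x : Ω) = o}
          ≃ {x : X // x ∈ orbitRel.Quotient.orbit o} := by
        refine Equiv.subtypeEquivRight fun x => ?_
        rw [orbitRel.Quotient.mem_orbit]
        constructor
        · exact And.right
        · intro h
          refine ⟨?_, h⟩
          rw [gcte_fixed_iff X a hgen x k, h]
          exact hdvd
      exact Nat.card_congr e1
    · rw [if_neg hdvd]
      have : IsEmpty {x : X // (a ^ k • x = x) ∧ (Quotient.mk'' x : Ω) = o} := by
        refine ⟨fun y => hdvd ?_⟩
        have := (gcte_fixed_iff X a hgen y.1 k).mp y.2.1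
        rwa [y.2.2] at this
      exact Nat.card_of_isEmpty
  simp_rw [stepA, stepB]
  rw [← Finset.sum_filter]
  rw [← Finset.sum_fiberwise_of_maps_to (g := c) (t := k.divisors)
    (fun o ho => Nat.mem_divisors.mpr ⟨(Finset.mem_filter.mp ho).2, by omega⟩)]
  refine Finset.sum_congr rfl fun d hd => ?_
  have hdk : d ∣ k := (Nat.mem_divisors.mp hd).1
  have hfilter : (Finset.univ.filter fun o => c o ∣ k).filter (fun o => c o = d)
      = Finset.univ.filter fun o => c o = d := by
    ext o
    simp only [Finset.mem_filter, Finset.mem_univ, true_and]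
    exact ⟨fun h => h.2, fun h => ⟨h ▸ hdk, h⟩⟩
  rw [hfilter]
  rw [Finset.sum_congr rfl (fun o ho => (Finset.mem_filter.mp ho).2), Finset.sum_const,
    smul_eq_mul, Nat.card_eq_fintype_card, Fintype.card_subtype, Nat.mul_comm]

section GassmannSide

variable {G : Type} [Group G] [Fintype G]

lemma gcte_P (τ : G) (H : Subgroup G) :
    Nat.card {x : G ⧸ H // τ • x = x} * Nat.card H
      = Nat.card {g : G // g⁻¹ * τ * g ∈ H} := by
  classical
  set t : Set (G ⧸ H) := {x | τ • x = x} with ht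
  have e := QuotientGroup.preimageMkEquivSubgroupProdSet H t
  have h1 : Nat.card (QuotientGroup.mk ⁻¹' t : Set G) = Nat.card H * Nat.card t := by
    rw [Nat.card_congr e, Nat.card_prod]
  have e2 : {g : G // g⁻¹ * τ * g ∈ H} ≃ (QuotientGroup.mk ⁻¹' t : Set G) := by
    refine Equiv.subtypeEquivRight fun g => ?_
    show g⁻¹ * τ * g ∈ H ↔ g ∈ QuotientGroup.mk ⁻¹' t
    rw [Set.mem_preimage]
    show g⁻¹ * τ * g ∈ H ↔ τ • (QuotientGroup.mk g : G ⧸ H) = QuotientGroup.mk g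
    rw [MulAction.Quotient.smul_mk, QuotientGroup.eq, smul_eq_mul]
    have h3 : (τ * g)⁻¹ * g = (g⁻¹ * τ * g)⁻¹ := by group
    rw [h3, H.inv_mem_iff]
  rw [Nat.card_congr e2, h1, Nat.mul_comm]
  rfl

omit [Fintype G] in
lemma gcte_key (τ g₁ g₂ : G) (hgg : g₁⁻¹ * τ * g₁ = g₂⁻¹ * τ * g₂) :
    τ * (g₁ * g₂⁻¹) = (g₁ * g₂⁻¹) * τ := by
  have h2 := congrArg (fun w => g₁ * w * g₂⁻¹) hgg
  have l : g₁ * (g₁⁻¹ * τ * g₁) * g₂⁻¹ = τ * (g₁ * g₂⁻¹) := by group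
  have rr : g₁ * (g₂⁻¹ * τ * g₂) * g₂⁻¹ = (g₁ * g₂⁻¹) * τ := by group
  rw [← l, h2, rr]

omit [Fintype G] in
lemma gcte_fiber (τ h g₀ : G) (hg₀ : g₀⁻¹ * τ * g₀ = h) :
    Nat.card {g : G // g⁻¹ * τ * g = h}
      = Nat.card (Subgroup.centralizer {τ} : Subgroup G) := by
  refine Nat.card_congr ?_
  refine
    { toFun := fun g => ⟨g.1 * g₀⁻¹, ?_⟩
      invFun := fun z => ⟨z.1 * g₀, ?_⟩
      left_inv := fun g => by apply Subtype.ext; simp [mul_assoc]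
      right_inv := fun z => by apply Subtype.ext; simp [mul_assoc] }
  · rw [Subgroup.mem_centralizer_iff]
    rintro y hy
    rw [Set.mem_singleton_iff] at hy
    subst hy
    exact gcte_key y g.1 g₀ (g.2.trans hg₀.symm)
  · have hz : τ * z.1 = z.1 * τ :=
      (Subgroup.mem_centralizer_iff.mp z.2) τ (Set.mem_singleton τ)
    have h1 : z.1⁻¹ * τ * z.1 = τ := by
      rw [mul_assoc, hz, ← mul_assoc, inv_mul_cancel, one_mul]
    have h2 : (z.1 * g₀)⁻¹ * τ * (z.1 * g₀) = g₀⁻¹ * (z.1⁻¹ * τ * z.1) * g₀ := by group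
    rw [h2, h1, hg₀]

lemma gcte_Q (τ : G) (H : Subgroup G) :
    Nat.card {g : G // g⁻¹ * τ * g ∈ H}
      = Nat.card {h : G // h ∈ H ∧ IsConj τ h}
        * Nat.card (Subgroup.centralizer {τ} : Subgroup G) := by
  classical
  haveI : Fintype {h : G // h ∈ H ∧ IsConj τ h} := Fintype.ofFinite _
  have e1 := Equiv.sigmaFiberEquiv
    (fun g : {g : G // g⁻¹ * τ * g ∈ H} =>
      (⟨g.1⁻¹ * τ * g.1, g.2, isConj_iff.mpr ⟨g.1⁻¹, by rw [inv_inv]⟩⟩ :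
        {h : G // h ∈ H ∧ IsConj τ h}))
  rw [Nat.card_congr e1.symm, gcte_card_sigma]
  have hterm : ∀ h : {h : G // h ∈ H ∧ IsConj τ h},
      Nat.card {g : {g : G // g⁻¹ * τ * g ∈ H} //
          (⟨g.1⁻¹ * τ * g.1, g.2, isConj_iff.mpr ⟨g.1⁻¹, by rw [inv_inv]⟩⟩ :
            {h : G // h ∈ H ∧ IsConj τ h}) = h}
        = Nat.card (Subgroup.centralizer {τ} : Subgroup G) := by
    intro h
    obtain ⟨c, hc⟩ := isConj_iff.mp h.2.2
    have hg₀ : (c⁻¹)⁻¹ * τ * c⁻¹ = h.1 := by rwa [inv_inv]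
    rw [← gcte_fiber τ h.1 c⁻¹ hg₀]
    refine Nat.card_congr ?_
    have e2 : {g : {g : G // g⁻¹ * τ * g ∈ H} //
          (⟨g.1⁻¹ * τ * g.1, g.2, isConj_iff.mpr ⟨g.1⁻¹, by rw [inv_inv]⟩⟩ :
            {h : G // h ∈ H ∧ IsConj τ h}) = h}
        ≃ {g : {g : G // g⁻¹ * τ * g ∈ H} // g.1⁻¹ * τ * g.1 = h.1} :=
      Equiv.subtypeEquivRight fun g => Subtype.ext_iff
    have e3 : {g : {g : G // g⁻¹ * τ * g ∈ H} // g.1⁻¹ * τ * g.1 = h.1}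
        ≃ {g : G // g⁻¹ * τ * g = h.1} :=
      Equiv.subtypeSubtypeEquivSubtype (p := fun g : G => g⁻¹ * τ * g ∈ H)
        (q := fun g : G => g⁻¹ * τ * g = h.1)
        (fun {x} hx => by
          change x⁻¹ * τ * x = h.1 at hx
          change x⁻¹ * τ * x ∈ H
          rw [hx]; exact h.2.1)
    exact e2.trans e3
  simp_rw [hterm, Finset.sum_const, smul_eq_mul, Finset.card_univ, Nat.card_eq_fintype_card]

lemma gcte_subgroup_card (H : Subgroup G) [Fintype (ConjClasses G)] :
    Nat.card H = ∑ c : ConjClasses G, Nat.card {h : G // h ∈ H ∧ IsConj (Quotient.out c) h} := by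
  classical
  have h0 : Nat.card H = Nat.card {h : G // h ∈ H} := rfl
  rw [h0, Nat.card_congr (Equiv.sigmaFiberEquiv
    (fun h : {h : G // h ∈ H} => ConjClasses.mk h.1)).symm, gcte_card_sigma]
  refine Finset.sum_congr rfl fun c _ => Nat.card_congr ?_
  have e2 : {h : {h : G // h ∈ H} // ConjClasses.mk h.1 = c}
      ≃ {h : G // h ∈ H ∧ ConjClasses.mk h = c} :=
    Equiv.subtypeSubtypeEquivSubtypeInter (fun h : G => h ∈ H)
      (fun h => ConjClasses.mk h = c)
  refine e2.trans (Equiv.subtypeEquivRight fun h => ?_)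
  have hout : ConjClasses.mk (Quotient.out c) = c := Quotient.out_eq c
  constructor
  · rintro ⟨h1, h2⟩
    rw [← hout] at h2
    exact ⟨h1, (ConjClasses.mk_eq_mk_iff_isConj.mp h2.symm)⟩
  · rintro ⟨h1, h2⟩
    exact ⟨h1, by rw [← hout]; exact ConjClasses.mk_eq_mk_iff_isConj.mpr h2.symm⟩

lemma gcte_R (H₁ H₂ : Subgroup G)
    (hGass : ∀ g : G, Nat.card {h : G // h ∈ H₁ ∧ IsConj g h}
                    = Nat.card {h : G // h ∈ H₂ ∧ IsConj g h}) :
    Nat.card H₁ = Nat.card H₂ := by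
  classical
  haveI : Fintype (ConjClasses G) := Fintype.ofFinite _
  rw [gcte_subgroup_card H₁, gcte_subgroup_card H₂]
  exact Finset.sum_congr rfl fun c _ => hGass _

lemma gcte_F (H₁ H₂ : Subgroup G)
    (hGass : ∀ g : G, Nat.card {h : G // h ∈ H₁ ∧ IsConj g h}
                    = Nat.card {h : G // h ∈ H₂ ∧ IsConj g h})
    (τ : G) :
    Nat.card {x : G ⧸ H₁ // τ • x = x} = Nat.card {x : G ⧸ H₂ // τ • x = x} := by
  have h1 := gcte_P τ H₁
  have h2 := gcte_P τ H₂
  rw [gcte_Q τ H₁, hGass τ, ← gcte_Q τ H₂, ← h2] at h1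
  rw [gcte_R H₁ H₂ hGass] at h1
  exact Nat.eq_of_mul_eq_mul_right Nat.card_pos h1

end GassmannSide

/-- Let `(G, H₁, H₂)` satisfy the Gassmann condition and let `σ ∈ G`. Then
the permutation of the coset space `H₁\G` induced by `σ` and the permutation of `H₂\G`
induced by `σ` have, for each `n ≥ 1`, the same number of orbits (cycles) of length `n`.
(Orbits of the permutation induced by `σ` are the orbits of the cyclic group `⟨σ⟩` acting
on the coset space.) -/
theorem gassmann_cycle_types_eq (G : Type) [Group G] [Fintype G] (H₁ H₂ : Subgroup G)
    (hGass : ∀ g : G, Nat.card {h : G // h ∈ H₁ ∧ IsConj g h}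
                    = Nat.card {h : G // h ∈ H₂ ∧ IsConj g h})
    (σ : G) :
    ∀ n : ℕ, 1 ≤ n →
      Nat.card {o : MulAction.orbitRel.Quotient (Subgroup.zpowers σ) (G ⧸ H₁) //
          Nat.card o.orbit = n}
        = Nat.card {o : MulAction.orbitRel.Quotient (Subgroup.zpowers σ) (G ⧸ H₂) //
          Nat.card o.orbit = n} := by
  intro n hn
  set a : (Subgroup.zpowers σ) := ⟨σ, Subgroup.mem_zpowers σ⟩ with ha
  have hgen : ∀ x : (Subgroup.zpowers σ), x ∈ Subgroup.zpowers a := by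
    rintro ⟨x, hx⟩
    obtain ⟨m, rfl⟩ := Subgroup.mem_zpowers_iff.mp hx
    refine Subgroup.mem_zpowers_iff.mpr ⟨m, ?_⟩
    apply Subtype.ext
    rw [SubgroupClass.coe_zpow]
  refine gcte_inversion
    (fun d => Nat.card {o : MulAction.orbitRel.Quotient (Subgroup.zpowers σ) (G ⧸ H₁) //
      Nat.card (MulAction.orbitRel.Quotient.orbit o) = d})
    (fun d => Nat.card {o : MulAction.orbitRel.Quotient (Subgroup.zpowers σ) (G ⧸ H₂) //
      Nat.card (MulAction.orbitRel.Quotient.orbit o) = d})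
    (fun k hk => ?_) n hn
  rw [← gcte_count (G ⧸ H₁) a hgen k hk, ← gcte_count (G ⧸ H₂) a hgen k hk]
  have hsm : ∀ (H : Subgroup G) (x : G ⧸ H), (a ^ k • x = x) ↔ (σ ^ k • x = x) := by
    intro H x
    have hcoe : a ^ k • x = σ ^ k • x := by
      show ((a ^ k : Subgroup.zpowers σ) : G) • x = σ ^ k • x
      rw [SubmonoidClass.coe_pow]
    rw [hcoe]
  rw [Nat.card_congr (Equiv.subtypeEquivRight (hsm H₁)),
    Nat.card_congr (Equiv.subtypeEquivRight (hsm H₂))]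
  exact gcte_F H₁ H₂ hGass (σ ^ k)
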